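/- arXiv:1603.05895 — 2 statements merged into one kernel-verified Lean document; each statement's English description precedes it below -/
import Mathlib

section
/- Suppose Δ(ε) → 0 as ε → 0⁺, M < ∞, |ζ(ε)| ≤ 1, and 1 = φ₀(ε) + Δ(ε)φ₁(ε) + (Δ(ε)²/2)φ₂(ε) + Δ(ε)³·M·ζ(ε), where φ₀(ε) = 1 + b₀₁ε + b₀₂ε² + o(ε²), φ₁(ε) = b₁₀ + b₁₁ε + o(ε) with b₁₀ > 0, and φ₂(ε) = b₂₀ + o(1). Then Δ(ε) = c₁ε + c₂ε² + o(ε²) with c₁ = −b₀₁/b₁₀ and c₂ = −(b₀₂ + b₁₁c₁ + b₂₀c₁²/2)/b₁₀. -/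
open Filter

theorem root_expansion_second_order
    (Δ φ₀ φ₁ φ₂ ζ : ℝ → ℝ) (M b01 b02 b10 b11 b20 : ℝ) (hb10 : 0 < b10)
    (hΔ : Tendsto Δ (nhdsWithin 0 (Set.Ioi 0)) (nhds 0))
    (hζ : ∀ ε, |ζ ε| ≤ 1)
    (heq : ∀ᶠ ε in nhdsWithin 0 (Set.Ioi 0),
      1 = φ₀ ε + Δ ε * φ₁ ε + (Δ ε) ^ 2 / 2 * φ₂ ε + (Δ ε) ^ 3 * M * ζ ε)
    (hφ₀ : Tendsto (fun ε => (φ₀ ε - 1 - b01 * ε - b02 * ε ^ 2) / ε ^ 2)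
      (nhdsWithin 0 (Set.Ioi 0)) (nhds 0))
    (hφ₁ : Tendsto (fun ε => (φ₁ ε - b10 - b11 * ε) / ε)
      (nhdsWithin 0 (Set.Ioi 0)) (nhds 0))
    (hφ₂ : Tendsto φ₂ (nhdsWithin 0 (Set.Ioi 0)) (nhds b20)) :
    ∃ c₁ c₂ : ℝ, c₁ = -b01 / b10 ∧
      c₂ = -(b02 + b11 * c₁ + b20 * c₁ ^ 2 / 2) / b10 ∧
      Tendsto (fun ε => (Δ ε - c₁ * ε - c₂ * ε ^ 2) / ε ^ 2)
        (nhdsWithin 0 (Set.Ioi 0)) (nhds 0) := by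
  set l := nhdsWithin (0:ℝ) (Set.Ioi 0) with hl
  have hb10' : b10 ≠ 0 := ne_of_gt hb10
  obtain ⟨c₁, hc₁⟩ : ∃ c : ℝ, c = -b01 / b10 := ⟨_, rfl⟩
  obtain ⟨c₂, hc₂⟩ : ∃ c : ℝ, c = -(b02 + b11 * c₁ + b20 * c₁ ^ 2 / 2) / b10 := ⟨_, rfl⟩
  refine ⟨c₁, c₂, hc₁, hc₂, ?_⟩
  have hεpos : ∀ᶠ ε in l, (0:ℝ) < ε := eventually_mem_nhdsWithin
  have hε : Tendsto (fun ε : ℝ => ε) l (nhds 0) :=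
    tendsto_id.mono_left nhdsWithin_le_nhds
  -- φ₁ tends to b10
  have hφ₁lim : Tendsto φ₁ l (nhds b10) := by
    have h1 : Tendsto (fun ε => (φ₁ ε - b10 - b11 * ε) / ε * ε + b10 + b11 * ε) l
        (nhds (0 * 0 + b10 + b11 * 0)) :=
      ((hφ₁.mul hε).add_const b10).add (hε.const_mul b11)
    rw [show (0:ℝ) * 0 + b10 + b11 * 0 = b10 by ring] at h1
    refine h1.congr' ?_
    filter_upwards [hεpos] with ε hε0
    field_simp
    ring
  -- (φ₀ - 1)/ε tends to b01
  have hT : Tendsto (fun ε => (φ₀ ε - 1) / ε) l (nhds b01) := by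
    have h1 : Tendsto (fun ε => (φ₀ ε - 1 - b01 * ε - b02 * ε ^ 2) / ε ^ 2 * ε + b01 + b02 * ε) l
        (nhds (0 * 0 + b01 + b02 * 0)) :=
      ((hφ₀.mul hε).add_const b01).add (hε.const_mul b02)
    rw [show (0:ℝ) * 0 + b01 + b02 * 0 = b01 by ring] at h1
    refine h1.congr' ?_
    filter_upwards [hεpos] with ε hε0
    have : ε ≠ 0 := ne_of_gt hε0
    field_simp
    try ring
  -- the auxiliary function g
  set g : ℝ → ℝ := fun ε => φ₁ ε + Δ ε * φ₂ ε / 2 + (Δ ε) ^ 2 * M * ζ ε with hgdef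
  have hZ1 : Tendsto (fun ε => (Δ ε) ^ 2 * M * ζ ε) l (nhds 0) := by
    have hb : Tendsto (fun ε => (Δ ε) ^ 2 * |M|) l (nhds 0) := by
      have := (hΔ.pow 2).mul_const |M|
      simpa using this
    refine squeeze_zero_norm' ?_ hb
    filter_upwards with ε
    have h1 := hζ ε
    have h2 : |ζ ε| ≤ 1 := h1
    calc ‖(Δ ε) ^ 2 * M * ζ ε‖ = (Δ ε) ^ 2 * |M| * |ζ ε| := by
          rw [Real.norm_eq_abs, abs_mul, abs_mul, abs_pow, sq_abs]
      _ ≤ (Δ ε) ^ 2 * |M| * 1 := by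
          gcongr <;> first | exact hζ ε | positivity
      _ = (Δ ε) ^ 2 * |M| := by ring
  have hg : Tendsto g l (nhds b10) := by
    have := (hφ₁lim.add ((hΔ.mul hφ₂).div_const 2)).add hZ1
    simpa using this
  have hgne : ∀ᶠ ε in l, g ε ≠ 0 := hg.eventually_ne hb10'
  -- first order: Δ/ε → c₁
  have hA : Tendsto (fun ε => Δ ε / ε) l (nhds c₁) := by
    have hnum : Tendsto (fun ε => (1 - φ₀ ε) / ε) l (nhds (-b01)) := by
      have := hT.neg
      refine this.congr fun ε => ?_
      ring
    have h := hnum.div hg hb10'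
    rw [show -b01 / b10 = c₁ from hc₁.symm] at h
    refine h.congr' ?_
    filter_upwards [hεpos, hgne, heq] with ε hε0 hgε heqε
    have hε0' : ε ≠ 0 := ne_of_gt hε0
    simp only [Pi.div_apply]
    have h1 : 1 - φ₀ ε = Δ ε * g ε := by
      simp only [hgdef]
      ring_nf
      ring_nf at heqε
      linarith
    rw [h1]
    field_simp
  -- second order combined numerator pieces
  have hcancel : c₁ * b10 = -b01 := by
    rw [hc₁]; field_simp
  have hP : Tendsto (fun ε => (φ₀ ε - 1) / ε ^ 2 + c₁ * φ₁ ε / ε) l (nhds (b02 + c₁ * b11)) := by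
    have h1 : Tendsto (fun ε =>
        (φ₀ ε - 1 - b01 * ε - b02 * ε ^ 2) / ε ^ 2 + b02
          + c₁ * ((φ₁ ε - b10 - b11 * ε) / ε) + c₁ * b11) l
        (nhds (0 + b02 + c₁ * 0 + c₁ * b11)) :=
      ((hφ₀.add_const b02).add (hφ₁.const_mul c₁)).add_const (c₁ * b11)
    rw [show (0:ℝ) + b02 + c₁ * 0 + c₁ * b11 = b02 + c₁ * b11 by ring] at h1
    refine h1.congr' ?_
    filter_upwards [hεpos] with ε hε0
    have hε0' : ε ≠ 0 := ne_of_gt hε0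
    field_simp
    linear_combination (-ε) * hcancel
  have hZ2 : Tendsto (fun ε => (Δ ε / ε) ^ 2 * Δ ε * M * ζ ε) l (nhds 0) := by
    have hb : Tendsto (fun ε => (Δ ε / ε) ^ 2 * |Δ ε| * |M|) l (nhds 0) := by
      have := ((hA.pow 2).mul hΔ.abs).mul_const |M|
      simpa using this
    refine squeeze_zero_norm' ?_ hb
    filter_upwards with ε
    calc ‖(Δ ε / ε) ^ 2 * Δ ε * M * ζ ε‖
        = (Δ ε / ε) ^ 2 * |Δ ε| * |M| * |ζ ε| := by
          rw [Real.norm_eq_abs, abs_mul, abs_mul, abs_mul, abs_pow, sq_abs]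
      _ ≤ (Δ ε / ε) ^ 2 * |Δ ε| * |M| * 1 := by
          gcongr <;> first | exact hζ ε | positivity
      _ = (Δ ε / ε) ^ 2 * |Δ ε| * |M| := by ring
  set R : ℝ → ℝ := fun ε => -((φ₀ ε - 1) / ε ^ 2 + c₁ * φ₁ ε / ε
      + (Δ ε / ε) ^ 2 / 2 * φ₂ ε + (Δ ε / ε) ^ 2 * Δ ε * M * ζ ε) with hRdef
  have hR : Tendsto R l (nhds (-(b02 + c₁ * b11 + c₁ ^ 2 / 2 * b20 + 0))) := by
    exact ((hP.add (((hA.pow 2).div_const 2).mul hφ₂)).add hZ2).neg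
  have hφ₁ne : ∀ᶠ ε in l, φ₁ ε ≠ 0 := hφ₁lim.eventually_ne hb10'
  have hD : Tendsto (fun ε => (Δ ε - c₁ * ε) / ε ^ 2) l (nhds c₂) := by
    have h := hR.div hφ₁lim hb10'
    have hval : -(b02 + c₁ * b11 + c₁ ^ 2 / 2 * b20 + 0) / b10 = c₂ := by
      rw [hc₂]; ring
    rw [hval] at h
    refine h.congr' ?_
    filter_upwards [hεpos, hφ₁ne, heq] with ε hε0 hφε heqε
    have hε0' : ε ≠ 0 := ne_of_gt hε0
    simp only [Pi.div_apply]
    have key : R ε = (Δ ε - c₁ * ε) / ε ^ 2 * φ₁ ε := by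
      simp only [hRdef, div_pow]
      field_simp
      linear_combination 2 * heqε
    rw [key, mul_div_assoc, div_self hφε, mul_one]
  have h := hD.sub_const c₂
  rw [sub_self] at h
  refine h.congr' ?_
  filter_upwards [hεpos] with ε hε0
  have hε0' : ε ≠ 0 := ne_of_gt hε0
  field_simp
end

section
/- Let g : ℕ → ℝ≥0 be a proper, non-periodic probability distribution on the positive integers with finite mean m = Σ_n n·g(n) < ∞, and let h : ℕ → ℝ≥0 satisfy Σ_n h(n) < ∞. If x : ℕ → ℝ≥0 is bounded and satisfies the renewal equation x(n) = h(n) + Σ_{k=0}^{n} x(n−k)g(k) for all n, then x(n) → (Σ_{k=0}^{∞} h(k))/m as n → ∞. -/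
open Filter Finset Topology

noncomputable def renSeq (g : ℕ → ℝ) : ℕ → ℝ
  | 0 => 1
  | n + 1 => ∑ k ∈ (range (n+1)).attach, g (n + 1 - k.1) * renSeq g k.1
decreasing_by exact mem_range.mp k.2

lemma renSeq_zero (g : ℕ → ℝ) : renSeq g 0 = 1 := by rw [renSeq]

lemma renSeq_succ (g : ℕ → ℝ) (n : ℕ) :
    renSeq g (n+1) = ∑ k ∈ range (n+1), g (n + 1 - k) * renSeq g k := by
  rw [renSeq, Finset.sum_attach (range (n+1)) (fun k => g (n+1-k) * renSeq g k)]

lemma renSeq_conv (g : ℕ → ℝ) (hg0 : g 0 = 0) (n : ℕ) :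
    ∑ m ∈ range (n+2), g m * renSeq g (n+1-m) = renSeq g (n+1) := by
  have h := Finset.sum_range_reflect (fun k => g (n+1-k) * renSeq g k) (n+2)
  have h2 : ∀ j ∈ range (n+2), g (n+1 - (n+2-1-j)) * renSeq g (n+2-1-j)
      = g (j) * renSeq g (n+1-j) := by
    intro j hj
    have hj' := mem_range.mp hj
    congr 2 <;> omega
  rw [Finset.sum_congr rfl h2] at h
  rw [h, Finset.sum_range_succ, renSeq_succ]
  have : n + 1 - (n + 1) = 0 := by omega
  simp [this, hg0]

lemma renSeq_nonneg (g : ℕ → ℝ) (hgnn : ∀ n, 0 ≤ g n) (n : ℕ) : 0 ≤ renSeq g n := by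
  induction n using Nat.strong_induction_on with
  | _ n ih =>
    match n with
    | 0 => rw [renSeq_zero]; norm_num
    | n + 1 =>
      rw [renSeq_succ]
      exact Finset.sum_nonneg fun k hk =>
        mul_nonneg (hgnn _) (ih k (mem_range.mp hk))

lemma partial_sum_g_le (g : ℕ → ℝ) (hgnn : ∀ n, 0 ≤ g n) (hgsum : Summable g)
    (hproper : ∑' n, g n = 1) (s : Finset ℕ) : ∑ k ∈ s, g k ≤ 1 := by
  rw [← hproper]; exact Summable.sum_le_tsum s (fun k _ => hgnn k) hgsum

lemma renSeq_le_one (g : ℕ → ℝ) (hgnn : ∀ n, 0 ≤ g n) (hg0 : g 0 = 0)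
    (hgsum : Summable g) (hproper : ∑' n, g n = 1) (n : ℕ) : renSeq g n ≤ 1 := by
  induction n using Nat.strong_induction_on with
  | _ n ih =>
    match n with
    | 0 => rw [renSeq_zero]
    | n + 1 =>
      rw [renSeq_succ]
      calc ∑ k ∈ range (n+1), g (n + 1 - k) * renSeq g k
          ≤ ∑ k ∈ range (n+1), g (n + 1 - k) := by
            apply Finset.sum_le_sum
            intro k hk
            have hk' := mem_range.mp hk
            have h1 := ih k (by omega)
            have h2 := renSeq_nonneg g hgnn k
            nlinarith [hgnn (n+1-k)]
        _ = ∑ k ∈ range (n+1), g (k+1) := by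
            rw [← Finset.sum_range_reflect]
            apply Finset.sum_congr rfl
            intro j hj; have := mem_range.mp hj; congr 1; omega
        _ ≤ 1 := by
            rw [← hproper]
            have : ∑ k ∈ range (n+1), g (k+1) = ∑ k ∈ range (n+2), g k := by
              rw [Finset.sum_range_succ' g (n+1), hg0, add_zero]
            rw [this]
            exact Summable.sum_le_tsum _ (fun k _ => hgnn k) hgsum

lemma sum_range_swap {M : Type*} [AddCommMonoid M] (n : ℕ) (F : ℕ → ℕ → M) :
    ∑ k ∈ range (n+1), ∑ m ∈ range (n+1-k), F k m
      = ∑ m ∈ range (n+1), ∑ k ∈ range (n+1-m), F k m := by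
  rw [Finset.sum_sigma', Finset.sum_sigma']
  refine sum_nbij' (fun x ↦ ⟨x.2, x.1⟩) (fun x ↦ ⟨x.2, x.1⟩) ?_ ?_ (fun _ _ ↦ rfl) (fun _ _ ↦ rfl)
    (fun _ _ ↦ rfl) <;>
  simp only [Finset.mem_range, Sigma.forall, Finset.mem_sigma] <;>
  rintro a b ⟨h₁, h₂⟩ <;> omega

lemma x_eq_conv (g h x : ℕ → ℝ) (hg0 : g 0 = 0)
    (hren : ∀ n : ℕ, x n = h n + ∑ m ∈ range (n + 1), x (n - m) * g m) :
    ∀ n, x n = ∑ k ∈ range (n+1), h k * renSeq g (n-k) := by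
  intro n
  induction n using Nat.strong_induction_on with
  | _ n ih =>
    match n with
    | 0 => rw [hren 0]; simp [hg0, renSeq_zero]
    | n + 1 =>
      have e1 : ∑ m ∈ range (n+2), x (n+1-m) * g m
          = ∑ m ∈ range (n+1), x (n-m) * g (m+1) := by
        rw [Finset.sum_range_succ' (fun m => x (n+1-m) * g m) (n+1)]
        simp only [hg0, mul_zero, add_zero]
        apply Finset.sum_congr rfl
        intro m hm
        congr 2
        omega
      have e2 : ∀ m ∈ range (n+1), x (n-m) * g (m+1)
          = ∑ k ∈ range (n+1-m), h k * renSeq g (n-m-k) * g (m+1) := by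
        intro m hm
        have hm' := mem_range.mp hm
        rw [ih (n-m) (by omega)]
        rw [Finset.sum_mul]
        apply Finset.sum_congr (by congr 1; omega) (fun k _ => rfl)
      have e4 : ∀ k ∈ range (n+1), h k * renSeq g (n+1-k)
          = ∑ m ∈ range (n+1-k), h k * renSeq g (n-k-m) * g (m+1) := by
        intro k hk
        have hk' := mem_range.mp hk
        have hnk : n + 1 - k = (n - k) + 1 := by omega
        rw [hnk, ← renSeq_conv g hg0 (n-k)]
        have h2 : n - k + 2 = (n - k + 1) + 1 := by omega
        rw [h2, Finset.sum_range_succ' (fun m => g m * renSeq g (n - k + 1 - m)) (n-k+1)]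
        simp only [hg0, zero_mul, add_zero, Finset.mul_sum]
        apply Finset.sum_congr rfl
        intro m hm
        have hm' := mem_range.mp hm
        have h3 : n - k + 1 - (m+1) = n - k - m := by omega
        rw [h3]; ring
      have e5 : ∀ m ∈ range (n+1), ∑ k ∈ range (n+1-m), h k * renSeq g (n-k-m) * g (m+1)
          = ∑ k ∈ range (n+1-m), h k * renSeq g (n-m-k) * g (m+1) := by
        intro m hm
        apply Finset.sum_congr rfl
        intro k hk
        have : n - k - m = n - m - k := by omega
        rw [this]
      have eR : ∑ k ∈ range (n+1+1), h k * renSeq g (n+1-k)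
          = h (n+1) + ∑ m ∈ range (n+1), ∑ k ∈ range (n+1-m), h k * renSeq g (n-m-k) * g (m+1) := by
        rw [Finset.sum_range_succ]
        have e3 : n + 1 - (n+1) = 0 := by omega
        rw [e3, renSeq_zero, mul_one, Finset.sum_congr rfl e4,
          sum_range_swap n (fun k m => h k * renSeq g (n-k-m) * g (m+1)),
          Finset.sum_congr rfl e5, add_comm]
      rw [hren (n+1), e1, Finset.sum_congr rfl e2, eR]

noncomputable def tailR (g : ℕ → ℝ) (k : ℕ) : ℝ := 1 - ∑ i ∈ range (k+1), g i

lemma tailR_nonneg (g : ℕ → ℝ) (hgnn : ∀ n, 0 ≤ g n) (hgsum : Summable g)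
    (hproper : ∑' n, g n = 1) (k : ℕ) : 0 ≤ tailR g k := by
  have := partial_sum_g_le g hgnn hgsum hproper (range (k+1))
  unfold tailR; linarith

lemma tailR_eq_tsum (g : ℕ → ℝ) (hgsum : Summable g) (hproper : ∑' n, g n = 1) (k : ℕ) :
    tailR g k = ∑' i, g (i + (k+1)) := by
  have := Summable.sum_add_tsum_nat_add (f := g) (k+1) hgsum
  unfold tailR; linarith

lemma tailR_identity (g : ℕ → ℝ) (hg0 : g 0 = 0) (n : ℕ) :
    ∑ i ∈ range (n+1), tailR g i * renSeq g (n-i) = 1 := by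
  induction n with
  | zero => simp [tailR, renSeq_zero, hg0]
  | succ n ih =>
    rw [Finset.sum_range_succ' (fun i => tailR g i * renSeq g (n+1-i)) (n+1)]
    have h0 : tailR g 0 * renSeq g (n+1-0) = renSeq g (n+1) := by
      simp [tailR, hg0]
    rw [h0]
    have h1 : ∀ i ∈ range (n+1), tailR g (i+1) * renSeq g (n+1-(i+1))
        = tailR g i * renSeq g (n-i) - g (i+1) * renSeq g (n-i) := by
      intro i hi
      have : n + 1 - (i+1) = n - i := by omega
      rw [this]
      have : tailR g (i+1) = tailR g i - g (i+1) := by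
        unfold tailR
        rw [Finset.sum_range_succ]
        ring
      rw [this]; ring
    rw [Finset.sum_congr rfl h1, Finset.sum_sub_distrib, ih]
    have h2 : ∑ i ∈ range (n+1), g (i+1) * renSeq g (n-i) = renSeq g (n+1) := by
      rw [renSeq_succ]
      rw [← Finset.sum_range_reflect (fun k => g (n+1-k) * renSeq g k) (n+1)]
      apply Finset.sum_congr rfl
      intro j hj
      have hj' := mem_range.mp hj
      congr 2 <;> omega
    rw [h2]; ring

lemma tailR_hasSum (g : ℕ → ℝ) (hgnn : ∀ n, 0 ≤ g n) (hgsum : Summable g)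
    (hproper : ∑' n, g n = 1) (hmean : Summable fun n : ℕ => (n : ℝ) * g n) :
    HasSum (tailR g) (∑' n : ℕ, (n : ℝ) * g n) := by
  set m := ∑' n : ℕ, (n : ℝ) * g n with hm
  set G : ℕ → ENNReal := fun n => ENNReal.ofReal (g n) with hG
  have hmnn : ∀ n : ℕ, (0:ℝ) ≤ (n : ℝ) * g n := fun n => mul_nonneg (by positivity) (hgnn n)
  have stepA : ∀ k, ENNReal.ofReal (tailR g k) = ∑' i, G (i + (k+1)) := by
    intro k
    rw [tailR_eq_tsum g hgsum hproper k]
    exact ENNReal.ofReal_tsum_of_nonneg (fun i => hgnn _) ((summable_nat_add_iff (k+1)).mpr hgsum)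
  set F : ℕ → ℕ → ENNReal := fun k n => if k < n then G n else 0 with hF
  have claim1 : ∀ k, ∑' i, G (i + (k+1)) = ∑' n, F k n := by
    intro k
    rw [← Summable.sum_add_tsum_nat_add' (f := F k) (k := k+1) ENNReal.summable]
    have h1 : ∑ i ∈ range (k+1), F k i = 0 := by
      apply Finset.sum_eq_zero
      intro i hi
      have := mem_range.mp hi
      simp only [hF]
      rw [if_neg (by omega)]
    rw [h1, zero_add]
    apply tsum_congr
    intro i
    simp only [hF]
    rw [if_pos (by omega)]
  have claim2 : ∀ n : ℕ, ∑' k, F k n = (n : ENNReal) * G n := by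
    intro n
    have h1 : ∑' k, F k n = ∑ k ∈ range n, F k n := by
      apply tsum_eq_sum
      intro k hk
      have : ¬ k < n := fun h => hk (mem_range.mpr h)
      simp only [hF]
      rw [if_neg (by omega)]
    rw [h1]
    have h2 : ∀ k ∈ range n, F k n = G n := by
      intro k hk
      have := mem_range.mp hk
      simp only [hF]
      rw [if_pos (by omega)]
    rw [Finset.sum_congr rfl h2, Finset.sum_const, Finset.card_range, nsmul_eq_mul]
  have stepB : ∑' (k : ℕ), ∑' (i : ℕ), G (i + (k+1)) = ∑' n : ℕ, (n : ENNReal) * G n := by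
    rw [tsum_congr claim1, ENNReal.tsum_comm, tsum_congr claim2]
  have stepC : ∑' n : ℕ, (n : ENNReal) * G n = ENNReal.ofReal m := by
    rw [hm, ENNReal.ofReal_tsum_of_nonneg hmnn hmean]
    apply tsum_congr
    intro n
    rw [ENNReal.ofReal_mul (by positivity)]
    simp [hG]
  have key : ∑' k, ENNReal.ofReal (tailR g k) = ENNReal.ofReal m := by
    rw [tsum_congr stepA, stepB, stepC]
  have hne : ∑' k, ENNReal.ofReal (tailR g k) ≠ ⊤ := by
    rw [key]; exact ENNReal.ofReal_ne_top
  have heq : (fun k => (ENNReal.ofReal (tailR g k)).toReal) = tailR g :=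
    funext fun k => ENNReal.toReal_ofReal (tailR_nonneg g hgnn hgsum hproper k)
  have hsummable : Summable (tailR g) := heq ▸ ENNReal.summable_toReal hne
  have htsum : ∑' k, tailR g k = m := by
    have h1 := ENNReal.tsum_toReal_eq (f := fun k => ENNReal.ofReal (tailR g k))
      (fun k => ENNReal.ofReal_ne_top)
    rw [key, ENNReal.toReal_ofReal (tsum_nonneg hmnn)] at h1
    calc ∑' k, tailR g k = ∑' k, (ENNReal.ofReal (tailR g k)).toReal := by
          exact (tsum_congr (fun k => congrFun heq k)).symm
      _ = m := h1.symm
  rw [← htsum]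
  exact hsummable.hasSum

lemma bdd_le_of_le_one {v : ℕ → ℝ} (h1 : ∀ n, v n ≤ 1) :
    Filter.IsBoundedUnder (· ≤ ·) atTop v := Filter.isBoundedUnder_of ⟨1, h1⟩

lemma bdd_ge_of_nonneg {v : ℕ → ℝ} (h0 : ∀ n, 0 ≤ v n) :
    Filter.IsBoundedUnder (· ≥ ·) atTop v := Filter.isBoundedUnder_of ⟨0, h0⟩

lemma subseq_to_limsup (v : ℕ → ℝ) (h0 : ∀ n, 0 ≤ v n) (h1 : ∀ n, v n ≤ 1) :
    ∃ φ : ℕ → ℕ, StrictMono φ ∧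
      Tendsto (fun j => v (φ j)) atTop (𝓝 (limsup v atTop)) := by
  set L := limsup v atTop with hL
  have hfreq : ∀ j : ℕ, ∃ᶠ n in atTop, |v n - L| < 1/(j+1) := by
    intro j
    have hpos : (0:ℝ) < 1/(j+1) := by positivity
    have hup : ∀ᶠ n in atTop, v n < L + 1/(j+1) :=
      eventually_lt_of_limsup_lt (by linarith) (bdd_le_of_le_one h1)
    have hlo : ∃ᶠ n in atTop, L - 1/(j+1) < v n :=
      frequently_lt_of_lt_limsup ((bdd_ge_of_nonneg h0).isCoboundedUnder_le) (by linarith)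
    refine (hlo.and_eventually hup).mono ?_
    rintro n ⟨hn1, hn2⟩
    rw [abs_lt]
    constructor <;> linarith
  obtain ⟨φ, hmono, hφ⟩ := extraction_forall_of_frequently hfreq
  refine ⟨φ, hmono, ?_⟩
  rw [tendsto_iff_dist_tendsto_zero]
  apply squeeze_zero (fun j => dist_nonneg) (fun j => ?_) tendsto_one_div_add_atTop_nhds_zero_nat
  rw [Real.dist_eq]
  exact le_of_lt (hφ j)

lemma subseq_to_liminf (v : ℕ → ℝ) (h0 : ∀ n, 0 ≤ v n) (h1 : ∀ n, v n ≤ 1) :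
    ∃ φ : ℕ → ℕ, StrictMono φ ∧
      Tendsto (fun j => v (φ j)) atTop (𝓝 (liminf v atTop)) := by
  set L := liminf v atTop with hL
  have hfreq : ∀ j : ℕ, ∃ᶠ n in atTop, |v n - L| < 1/(j+1) := by
    intro j
    have hpos : (0:ℝ) < 1/(j+1) := by positivity
    have hup : ∀ᶠ n in atTop, L - 1/(j+1) < v n :=
      eventually_lt_of_lt_liminf (by linarith) (bdd_ge_of_nonneg h0)
    have hlo : ∃ᶠ n in atTop, v n < L + 1/(j+1) :=
      frequently_lt_of_liminf_lt ((bdd_le_of_le_one h1).isCoboundedUnder_ge) (by linarith)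
    refine (hlo.and_eventually hup).mono ?_
    rintro n ⟨hn1, hn2⟩
    rw [abs_lt]
    constructor <;> linarith
  obtain ⟨φ, hmono, hφ⟩ := extraction_forall_of_frequently hfreq
  refine ⟨φ, hmono, ?_⟩
  rw [tendsto_iff_dist_tendsto_zero]
  apply squeeze_zero (fun j => dist_nonneg) (fun j => ?_) tendsto_one_div_add_atTop_nhds_zero_nat
  rw [Real.dist_eq]
  exact le_of_lt (hφ j)

lemma renSeq_conv' (g : ℕ → ℝ) (hg0 : g 0 = 0) {n : ℕ} (hn : 1 ≤ n) :
    renSeq g n = ∑ m ∈ range (n+1), g m * renSeq g (n-m) := by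
  obtain ⟨n', rfl⟩ : ∃ n', n = n'+1 := ⟨n-1, by omega⟩
  have h2 : n' + 1 + 1 = n' + 2 := by omega
  rw [h2]
  exact (renSeq_conv g hg0 n').symm

lemma conv_upper (g : ℕ → ℝ) (hgnn : ∀ n, 0 ≤ g n) (hg0 : g 0 = 0)
    (hgsum : Summable g) (hproper : ∑' n, g n = 1)
    {k K n : ℕ} (hkK : k ≤ K) (hKn : K + 1 ≤ n) {c : ℝ}
    (hc : ∀ i ∈ range (K+1), i ≠ k → renSeq g (n-i) ≤ c) :
    renSeq g n ≤ g k * renSeq g (n-k) +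
      ((∑ i ∈ range (K+1), g i) - g k) * c + (1 - ∑ i ∈ range (K+1), g i) := by
  set S := ∑ i ∈ range (K+1), g i with hS
  have hkmem : k ∈ range (K+1) := mem_range.mpr (by omega)
  rw [renSeq_conv' g hg0 (by omega : 1 ≤ n)]
  rw [← Finset.sum_range_add_sum_Ico (fun m => g m * renSeq g (n-m)) (by omega : K+1 ≤ n+1)]
  have hB2 : ∑ i ∈ Finset.Ico (K+1) (n+1), g i * renSeq g (n-i) ≤ 1 - S := by
    calc ∑ i ∈ Finset.Ico (K+1) (n+1), g i * renSeq g (n-i)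
        ≤ ∑ i ∈ Finset.Ico (K+1) (n+1), g i := by
          apply Finset.sum_le_sum
          intro i hi
          have h1 := renSeq_le_one g hgnn hg0 hgsum hproper (n-i)
          have h2 := renSeq_nonneg g hgnn (n-i)
          nlinarith [hgnn i]
      _ ≤ 1 - S := by
          have := partial_sum_g_le g hgnn hgsum hproper (range (n+1))
          have hsplit := Finset.sum_range_add_sum_Ico g (by omega : K+1 ≤ n+1)
          rw [hS]; linarith
  have hB1 : ∑ i ∈ range (K+1), g i * renSeq g (n-i)
      ≤ g k * renSeq g (n-k) + (S - g k) * c := by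
    rw [← Finset.add_sum_erase (range (K+1)) (fun i => g i * renSeq g (n-i)) hkmem]
    have herase : ∑ i ∈ (range (K+1)).erase k, g i * renSeq g (n-i)
        ≤ (S - g k) * c := by
      have hgerase : ∑ i ∈ (range (K+1)).erase k, g i = S - g k := by
        have := Finset.add_sum_erase (range (K+1)) g hkmem
        rw [hS]; linarith
      calc ∑ i ∈ (range (K+1)).erase k, g i * renSeq g (n-i)
          ≤ ∑ i ∈ (range (K+1)).erase k, g i * c := by
            apply Finset.sum_le_sum
            intro i hi
            exact mul_le_mul_of_nonneg_left
              (hc i (Finset.mem_of_mem_erase hi) (Finset.ne_of_mem_erase hi)) (hgnn i)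
        _ = (S - g k) * c := by rw [← Finset.sum_mul, hgerase]
    linarith
  linarith

lemma conv_lower (g : ℕ → ℝ) (hgnn : ∀ n, 0 ≤ g n) (hg0 : g 0 = 0)
    {k K n : ℕ} (hkK : k ≤ K) (hKn : K + 1 ≤ n) {c : ℝ}
    (hc : ∀ i ∈ range (K+1), i ≠ k → c ≤ renSeq g (n-i)) :
    g k * renSeq g (n-k) + ((∑ i ∈ range (K+1), g i) - g k) * c ≤ renSeq g n := by
  set S := ∑ i ∈ range (K+1), g i with hS
  have hkmem : k ∈ range (K+1) := mem_range.mpr (by omega)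
  rw [renSeq_conv' g hg0 (by omega : 1 ≤ n)]
  rw [← Finset.sum_range_add_sum_Ico (fun m => g m * renSeq g (n-m)) (by omega : K+1 ≤ n+1)]
  have hB2 : (0:ℝ) ≤ ∑ i ∈ Finset.Ico (K+1) (n+1), g i * renSeq g (n-i) :=
    Finset.sum_nonneg fun i _ => mul_nonneg (hgnn i) (renSeq_nonneg g hgnn _)
  have hB1 : g k * renSeq g (n-k) + (S - g k) * c
      ≤ ∑ i ∈ range (K+1), g i * renSeq g (n-i) := by
    rw [← Finset.add_sum_erase (range (K+1)) (fun i => g i * renSeq g (n-i)) hkmem]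
    have hgerase : ∑ i ∈ (range (K+1)).erase k, g i = S - g k := by
      have := Finset.add_sum_erase (range (K+1)) g hkmem
      rw [hS]; linarith
    have herase : (S - g k) * c
        ≤ ∑ i ∈ (range (K+1)).erase k, g i * renSeq g (n-i) := by
      calc (S - g k) * c = ∑ i ∈ (range (K+1)).erase k, g i * c := by
            rw [← Finset.sum_mul, hgerase]
        _ ≤ ∑ i ∈ (range (K+1)).erase k, g i * renSeq g (n-i) := by
            apply Finset.sum_le_sum
            intro i hi
            exact mul_le_mul_of_nonneg_left
              (hc i (Finset.mem_of_mem_erase hi) (Finset.ne_of_mem_erase hi)) (hgnn i)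
    linarith
  linarith

lemma limsup_comp_le (u : ℕ → ℝ) (h0 : ∀ n, 0 ≤ u n) (h1 : ∀ n, u n ≤ 1)
    (ψ : ℕ → ℕ) (hψ : Tendsto ψ atTop atTop) :
    limsup (fun j => u (ψ j)) atTop ≤ limsup u atTop := by
  have hmap : limsup (fun j => u (ψ j)) atTop = limsup u (Filter.map ψ atTop) := by
    rw [Filter.limsup, Filter.limsup, Filter.map_map]; rfl
  rw [hmap]
  haveI : (Filter.map ψ atTop).NeBot := Filter.map_neBot
  exact Filter.limsup_le_limsup_of_le hψ
    ((Filter.isBoundedUnder_of ⟨0, fun x => h0 x⟩ :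
      Filter.IsBoundedUnder (· ≥ ·) (Filter.map ψ atTop) u).isCoboundedUnder_le)
    (Filter.isBoundedUnder_of ⟨1, fun x => h1 x⟩)

lemma liminf_comp_ge (u : ℕ → ℝ) (h0 : ∀ n, 0 ≤ u n) (h1 : ∀ n, u n ≤ 1)
    (ψ : ℕ → ℕ) (hψ : Tendsto ψ atTop atTop) :
    liminf u atTop ≤ liminf (fun j => u (ψ j)) atTop := by
  have hmap : liminf (fun j => u (ψ j)) atTop = liminf u (Filter.map ψ atTop) := by
    rw [Filter.liminf, Filter.liminf, Filter.map_map]; rfl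
  rw [hmap]
  haveI : (Filter.map ψ atTop).NeBot := Filter.map_neBot
  exact Filter.liminf_le_liminf_of_le hψ
    (Filter.isBoundedUnder_of ⟨0, fun x => h0 x⟩)
    ((Filter.isBoundedUnder_of ⟨1, fun x => h1 x⟩ :
      Filter.IsBoundedUnder (· ≤ ·) (Filter.map ψ atTop) u).isCoboundedUnder_ge)

lemma real_le_of_forall_pos_le_add {a b : ℝ} (h : ∀ ε : ℝ, 0 < ε → a ≤ b + ε) : a ≤ b := by
  by_contra hab
  push_neg at hab
  have := h ((a - b)/2) (by linarith)
  linarith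

lemma partial_sums_tendsto (g : ℕ → ℝ) (hgsum : Summable g) (hproper : ∑' n, g n = 1) :
    Tendsto (fun K => ∑ i ∈ range (K+1), g i) atTop (𝓝 1) := by
  have h1 := hgsum.hasSum.tendsto_sum_nat
  rw [hproper] at h1
  exact h1.comp (tendsto_add_atTop_nat 1)

lemma shift_tendsto_limsup (g : ℕ → ℝ) (hgnn : ∀ n, 0 ≤ g n) (hg0 : g 0 = 0)
    (hgsum : Summable g) (hproper : ∑' n, g n = 1)
    (φ : ℕ → ℕ) (hφ : Tendsto φ atTop atTop)
    (hlim : Tendsto (fun j => renSeq g (φ j)) atTop (𝓝 (limsup (renSeq g) atTop)))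
    (k : ℕ) (hk : 0 < g k) :
    Tendsto (fun j => renSeq g (φ j - k)) atTop (𝓝 (limsup (renSeq g) atTop)) := by
  have h0 : ∀ n, 0 ≤ renSeq g n := renSeq_nonneg g hgnn
  have h1 : ∀ n, renSeq g n ≤ 1 := renSeq_le_one g hgnn hg0 hgsum hproper
  set lam := limsup (renSeq g) atTop with hlam
  set w : ℕ → ℝ := fun j => renSeq g (φ j - k) with hw
  have hψ : Tendsto (fun j => φ j - k) atTop atTop := by
    rw [tendsto_atTop]
    intro b
    filter_upwards [hφ.eventually_ge_atTop (b + k)] with j hj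
    omega
  have hw0 : ∀ j, 0 ≤ w j := fun j => h0 _
  have hw1 : ∀ j, w j ≤ 1 := fun j => h1 _
  have hLle : limsup w atTop ≤ lam := limsup_comp_le (renSeq g) h0 h1 _ hψ
  obtain ⟨σ, hσmono, hσ⟩ := subseq_to_liminf w hw0 hw1
  set B := liminf w atTop with hB
  have key : ∀ K, k ≤ K → ∀ ε : ℝ, 0 < ε →
      lam ≤ g k * B + ((∑ i ∈ range (K+1), g i) - g k) * (lam + ε)
        + (1 - ∑ i ∈ range (K+1), g i) := by
    intro K hkK ε hε
    have hev : ∀ᶠ n in atTop, renSeq g n < lam + ε :=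
      eventually_lt_of_limsup_lt (by linarith) (bdd_le_of_le_one h1)
    obtain ⟨N, hN⟩ := eventually_atTop.mp hev
    have hevj : ∀ᶠ j in atTop, N + (K + 1) ≤ φ (σ j) :=
      (hφ.comp hσmono.tendsto_atTop).eventually_ge_atTop (N + (K+1))
    have hptwise : ∀ᶠ j in atTop, renSeq g (φ (σ j)) ≤ g k * w (σ j)
        + ((∑ i ∈ range (K+1), g i) - g k) * (lam + ε)
        + (1 - ∑ i ∈ range (K+1), g i) := by
      filter_upwards [hevj] with j hj
      refine conv_upper g hgnn hg0 hgsum hproper hkK (by omega : K+1 ≤ φ (σ j)) ?_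
      intro i hi hik
      have hi' := mem_range.mp hi
      exact le_of_lt (hN _ (by omega))
    have hltend : Tendsto (fun j => renSeq g (φ (σ j))) atTop (𝓝 lam) :=
      hlim.comp hσmono.tendsto_atTop
    have hrtend : Tendsto (fun j => g k * w (σ j)
        + ((∑ i ∈ range (K+1), g i) - g k) * (lam + ε)
        + (1 - ∑ i ∈ range (K+1), g i)) atTop
        (𝓝 (g k * B + ((∑ i ∈ range (K+1), g i) - g k) * (lam + ε)
        + (1 - ∑ i ∈ range (K+1), g i))) :=
      ((hσ.const_mul (g k)).add_const _).add_const _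
    exact le_of_tendsto_of_tendsto hltend hrtend hptwise
  have key2 : ∀ K, k ≤ K →
      lam ≤ g k * B + ((∑ i ∈ range (K+1), g i) - g k) * lam
        + (1 - ∑ i ∈ range (K+1), g i) := by
    intro K hkK
    have hSk : g k ≤ ∑ i ∈ range (K+1), g i :=
      Finset.single_le_sum (fun i _ => hgnn i) (mem_range.mpr (by omega))
    have hS1 : ∑ i ∈ range (K+1), g i ≤ 1 := partial_sum_g_le g hgnn hgsum hproper _
    apply real_le_of_forall_pos_le_add
    intro ε hε
    have hkey := key K hkK ε hε
    have h2 : ((∑ i ∈ range (K+1), g i) - g k) * (lam + ε)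
        = ((∑ i ∈ range (K+1), g i) - g k) * lam
          + ((∑ i ∈ range (K+1), g i) - g k) * ε := by ring
    have h3 : ((∑ i ∈ range (K+1), g i) - g k) * ε ≤ ε := by
      nlinarith [hgnn k]
    linarith
  have hrhs : Tendsto (fun K => g k * B + ((∑ i ∈ range (K+1), g i) - g k) * lam
      + (1 - ∑ i ∈ range (K+1), g i)) atTop (𝓝 (g k * B + (1 - g k) * lam + 0)) := by
    have hS := partial_sums_tendsto g hgsum hproper
    have h2 : (1:ℝ) - 1 = 0 := by norm_num
    exact (((hS.sub_const (g k)).mul_const lam).const_add (g k * B)).add (h2 ▸ hS.const_sub 1)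
  have hfinal : lam ≤ g k * B + (1 - g k) * lam + 0 :=
    ge_of_tendsto hrhs (eventually_atTop.mpr ⟨k, fun K hK => key2 K hK⟩)
  have hlamB : lam ≤ B := by nlinarith [hfinal, hk]
  have hBL : B ≤ limsup w atTop :=
    liminf_le_limsup (bdd_le_of_le_one hw1) (bdd_ge_of_nonneg hw0)
  have hinf : liminf w atTop = lam := le_antisymm (le_trans hBL hLle) hlamB
  have hsup : limsup w atTop = lam := le_antisymm hLle (le_trans hlamB hBL)
  exact tendsto_of_liminf_eq_limsup hinf hsup (bdd_le_of_le_one hw1) (bdd_ge_of_nonneg hw0)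

lemma shift_tendsto_liminf (g : ℕ → ℝ) (hgnn : ∀ n, 0 ≤ g n) (hg0 : g 0 = 0)
    (hgsum : Summable g) (hproper : ∑' n, g n = 1)
    (φ : ℕ → ℕ) (hφ : Tendsto φ atTop atTop)
    (hlim : Tendsto (fun j => renSeq g (φ j)) atTop (𝓝 (liminf (renSeq g) atTop)))
    (k : ℕ) (hk : 0 < g k) :
    Tendsto (fun j => renSeq g (φ j - k)) atTop (𝓝 (liminf (renSeq g) atTop)) := by
  have h0 : ∀ n, 0 ≤ renSeq g n := renSeq_nonneg g hgnn
  have h1 : ∀ n, renSeq g n ≤ 1 := renSeq_le_one g hgnn hg0 hgsum hproper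
  set mu := liminf (renSeq g) atTop with hmu
  set w : ℕ → ℝ := fun j => renSeq g (φ j - k) with hw
  have hψ : Tendsto (fun j => φ j - k) atTop atTop := by
    rw [tendsto_atTop]
    intro b
    filter_upwards [hφ.eventually_ge_atTop (b + k)] with j hj
    omega
  have hw0 : ∀ j, 0 ≤ w j := fun j => h0 _
  have hw1 : ∀ j, w j ≤ 1 := fun j => h1 _
  have hBge : mu ≤ liminf w atTop := liminf_comp_ge (renSeq g) h0 h1 _ hψ
  obtain ⟨σ, hσmono, hσ⟩ := subseq_to_limsup w hw0 hw1
  set L := limsup w atTop with hL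
  have key : ∀ K, k ≤ K → ∀ ε : ℝ, 0 < ε →
      g k * L + ((∑ i ∈ range (K+1), g i) - g k) * (mu - ε) ≤ mu := by
    intro K hkK ε hε
    have hev : ∀ᶠ n in atTop, mu - ε < renSeq g n :=
      eventually_lt_of_lt_liminf (by linarith) (bdd_ge_of_nonneg h0)
    obtain ⟨N, hN⟩ := eventually_atTop.mp hev
    have hevj : ∀ᶠ j in atTop, N + (K + 1) ≤ φ (σ j) :=
      (hφ.comp hσmono.tendsto_atTop).eventually_ge_atTop (N + (K+1))
    have hptwise : ∀ᶠ j in atTop, g k * w (σ j)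
        + ((∑ i ∈ range (K+1), g i) - g k) * (mu - ε) ≤ renSeq g (φ (σ j)) := by
      filter_upwards [hevj] with j hj
      refine conv_lower g hgnn hg0 hkK (by omega : K+1 ≤ φ (σ j)) ?_
      intro i hi hik
      have hi' := mem_range.mp hi
      exact le_of_lt (hN _ (by omega))
    have hrtend : Tendsto (fun j => renSeq g (φ (σ j))) atTop (𝓝 mu) :=
      hlim.comp hσmono.tendsto_atTop
    have hltend : Tendsto (fun j => g k * w (σ j)
        + ((∑ i ∈ range (K+1), g i) - g k) * (mu - ε)) atTop
        (𝓝 (g k * L + ((∑ i ∈ range (K+1), g i) - g k) * (mu - ε))) :=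
      (hσ.const_mul (g k)).add_const _
    exact le_of_tendsto_of_tendsto hltend hrtend hptwise
  have key2 : ∀ K, k ≤ K →
      g k * L + ((∑ i ∈ range (K+1), g i) - g k) * mu ≤ mu := by
    intro K hkK
    have hSk : g k ≤ ∑ i ∈ range (K+1), g i :=
      Finset.single_le_sum (fun i _ => hgnn i) (mem_range.mpr (by omega))
    have hS1 : ∑ i ∈ range (K+1), g i ≤ 1 := partial_sum_g_le g hgnn hgsum hproper _
    apply real_le_of_forall_pos_le_add
    intro ε hε
    have hkey := key K hkK ε hε
    have h2 : ((∑ i ∈ range (K+1), g i) - g k) * (mu - ε)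
        = ((∑ i ∈ range (K+1), g i) - g k) * mu
          - ((∑ i ∈ range (K+1), g i) - g k) * ε := by ring
    have h3 : ((∑ i ∈ range (K+1), g i) - g k) * ε ≤ ε := by
      nlinarith [hgnn k]
    linarith
  have hlhs : Tendsto (fun K => g k * L + ((∑ i ∈ range (K+1), g i) - g k) * mu)
      atTop (𝓝 (g k * L + (1 - g k) * mu)) := by
    have hS := partial_sums_tendsto g hgsum hproper
    exact ((hS.sub_const (g k)).mul_const mu).const_add (g k * L)
  have hfinal : g k * L + (1 - g k) * mu ≤ mu :=
    le_of_tendsto hlhs (eventually_atTop.mpr ⟨k, fun K hK => key2 K hK⟩)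
  have hLmu : L ≤ mu := by nlinarith [hfinal, hk]
  have hBL : liminf w atTop ≤ L :=
    liminf_le_limsup (bdd_le_of_le_one hw1) (bdd_ge_of_nonneg hw0)
  have hinf : liminf w atTop = mu := le_antisymm (le_trans hBL hLmu) hBge
  have hsup : limsup w atTop = mu := le_antisymm hLmu (le_trans hBge hBL)
  exact tendsto_of_liminf_eq_limsup hinf hsup (bdd_le_of_le_one hw1) (bdd_ge_of_nonneg hw0)

lemma semigroup_cofinite (S : Set ℕ) (hS : ∀ d : ℕ, 1 < d → ∃ n ∈ S, ¬ d ∣ n)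
    (A : Set ℕ) (h0 : 0 ∈ A) (hcl : ∀ a ∈ A, ∀ s ∈ S, a + s ∈ A) :
    ∃ N, ∀ n, N ≤ n → n ∈ A := by
  set M : Set ℕ := {m | ∀ a ∈ A, a + m ∈ A} with hM
  have hM0 : 0 ∈ M := fun a ha => by simpa using ha
  have hMadd : ∀ m₁ ∈ M, ∀ m₂ ∈ M, m₁ + m₂ ∈ M := by
    intro m₁ hm₁ m₂ hm₂ a ha
    have := hm₂ (a + m₁) (hm₁ a ha)
    rwa [add_assoc] at this
  have hMS : S ⊆ M := fun s hs a ha => hcl a ha s hs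
  have hMmul : ∀ m ∈ M, ∀ c : ℕ, c * m ∈ M := by
    intro m hm c
    induction c with
    | zero => simpa using hM0
    | succ c ih =>
      have := hMadd _ ih _ hm
      have he : c * m + m = (c+1) * m := by ring
      rwa [he] at this
  -- the subgroup of ℤ generated by S is all of ℤ
  obtain ⟨d, hd⟩ := Int.subgroup_cyclic (AddSubgroup.closure ((fun n : ℕ => (n:ℤ)) '' S))
  have hdvd : ∀ s ∈ S, (d.natAbs : ℕ) ∣ s := by
    intro s hs
    have hmem : (s:ℤ) ∈ AddSubgroup.closure ((fun n : ℕ => (n:ℤ)) '' S) :=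
      AddSubgroup.subset_closure ⟨s, hs, rfl⟩
    rw [hd, AddSubgroup.mem_closure_singleton] at hmem
    obtain ⟨c, hc⟩ := hmem
    have : d ∣ (s:ℤ) := Dvd.intro_left c (by rw [← hc]; simp [zsmul_eq_mul])
    exact Int.natAbs_dvd_natAbs.mpr (by simpa using this)
  have hd1 : d.natAbs = 1 := by
    by_contra hne
    rcases Nat.lt_or_ge d.natAbs 2 with hlt | hge
    · -- natAbs = 0 : all elements of S are 0, contradicting hS 2
      have h0' : d.natAbs = 0 := by omega
      obtain ⟨n, hn, hndvd⟩ := hS 2 (by norm_num)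
      have hz := hdvd n hn
      rw [h0'] at hz
      have hn0 : n = 0 := Nat.eq_zero_of_zero_dvd hz
      exact hndvd (by simp [hn0])
    · obtain ⟨n, hn, hndvd⟩ := hS d.natAbs (by omega)
      exact hndvd (hdvd n hn)
  -- 1 is an integer combination: get p, q ∈ M with p = q + 1
  have h1mem : (1:ℤ) ∈ AddSubgroup.closure ((fun n : ℕ => (n:ℤ)) '' S) := by
    rw [hd]
    rcases Int.natAbs_eq d with he | he <;> rw [hd1] at he
    · have hde : d = 1 := by exact_mod_cast he
      rw [← hde]
      exact AddSubgroup.mem_closure_singleton_self d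
    · have hde : d = -1 := by exact_mod_cast he
      have h1d : (1:ℤ) = -d := by rw [hde]; ring
      rw [h1d]
      exact AddSubgroup.neg_mem _ (AddSubgroup.mem_closure_singleton_self d)
  have hrep : ∃ p q : ℕ, p ∈ M ∧ q ∈ M ∧ (1:ℤ) = (p:ℤ) - (q:ℤ) := by
    have key : ∀ z ∈ AddSubgroup.closure ((fun n : ℕ => (n:ℤ)) '' S),
        ∃ p q : ℕ, p ∈ M ∧ q ∈ M ∧ z = (p:ℤ) - (q:ℤ) := by
      intro z hz
      induction hz using AddSubgroup.closure_induction with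
      | mem x hx =>
        obtain ⟨s, hs, rfl⟩ := hx
        exact ⟨s, 0, hMS hs, hM0, by simp⟩
      | zero => exact ⟨0, 0, hM0, hM0, by simp⟩
      | add x y hx hy ihx ihy =>
        obtain ⟨p1, q1, hp1, hq1, rfl⟩ := ihx
        obtain ⟨p2, q2, hp2, hq2, rfl⟩ := ihy
        exact ⟨p1 + p2, q1 + q2, hMadd _ hp1 _ hp2, hMadd _ hq1 _ hq2, by push_cast; ring⟩
      | neg x hx ihx =>
        obtain ⟨p, q, hp, hq, rfl⟩ := ihx
        exact ⟨q, p, hq, hp, by push_cast; ring⟩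
    exact key 1 h1mem
  obtain ⟨p, q, hp, hq, hpq⟩ := hrep
  have hpq' : p = q + 1 := by omega
  rcases Nat.eq_zero_or_pos q with hq0 | hqpos
  · -- 1 ∈ M, so everything is in M
    refine ⟨0, fun n _ => ?_⟩
    have h1M : 1 ∈ M := by rw [hq0] at hpq'; rwa [hpq'] at hp
    have := hMmul 1 h1M n
    rw [mul_one] at this
    have := this 0 h0
    simpa using this
  · refine ⟨q * q, fun n hn => ?_⟩
    have hr : n % q < q := Nat.mod_lt n hqpos
    have hc : q ≤ n / q := (Nat.le_div_iff_mul_le hqpos).mpr (by nlinarith)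
    set r := n % q with hrdef
    set c := n / q with hcdef
    have hrc : r ≤ c := by omega
    have hnM : n ∈ M := by
      have h1 : (c - r) * q ∈ M := hMmul q hq (c - r)
      have h2 : r * (q + 1) ∈ M := by
        rw [← hpq']
        exact hMmul p hp r
      have h3 : (c - r) * q + r * (q + 1) ∈ M := hMadd _ h1 _ h2
      have he : (c - r) * q + r * (q + 1) = n := by
        have e1 : (c - r) * q + r * (q + 1) = ((c - r) + r) * q + r := by ring
        have e2 : c - r + r = c := Nat.sub_add_cancel hrc
        rw [e1, e2, mul_comm c q, hcdef, hrdef]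
        exact Nat.div_add_mod n q
      rwa [he] at h3
    have := hnM 0 h0
    simpa using this

lemma partial_sums_tendsto' (f : ℕ → ℝ) {a : ℝ} (hf : HasSum f a) :
    Tendsto (fun K => ∑ i ∈ range (K+1), f i) atTop (𝓝 a) :=
  hf.tendsto_sum_nat.comp (tendsto_add_atTop_nat 1)

lemma renewal_limit_subseq (g : ℕ → ℝ) (hgnn : ∀ n, 0 ≤ g n) (hg0 : g 0 = 0)
    (hgsum : Summable g) (hproper : ∑' n, g n = 1)
    (hper : ∀ d : ℕ, 1 < d → ∃ n, 0 < g n ∧ ¬ d ∣ n)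
    (c : ℝ) (φ : ℕ → ℕ) (hφ : Tendsto φ atTop atTop)
    (hc : c = limsup (renSeq g) atTop ∨ c = liminf (renSeq g) atTop)
    (hlim : Tendsto (fun j => renSeq g (φ j)) atTop (𝓝 c)) :
    ∃ ω : ℕ → ℕ, Tendsto ω atTop atTop ∧
      ∀ i : ℕ, Tendsto (fun j => renSeq g (ω j - i)) atTop (𝓝 c) := by
  set A : Set ℕ := {a | Tendsto (fun j => renSeq g (φ j - a)) atTop (𝓝 c)} with hA
  have h0A : 0 ∈ A := by
    simp only [hA, Set.mem_setOf_eq, Nat.sub_zero]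
    exact hlim
  have hclA : ∀ a ∈ A, ∀ s ∈ {s : ℕ | 0 < g s}, a + s ∈ A := by
    intro a ha s hs
    have hψ : Tendsto (fun j => φ j - a) atTop atTop := by
      rw [tendsto_atTop]
      intro b
      filter_upwards [hφ.eventually_ge_atTop (b + a)] with j hj
      omega
    have hres : Tendsto (fun j => renSeq g (φ j - a - s)) atTop (𝓝 c) := by
      rcases hc with rfl | rfl
      · exact shift_tendsto_limsup g hgnn hg0 hgsum hproper _ hψ ha s hs
      · exact shift_tendsto_liminf g hgnn hg0 hgsum hproper _ hψ ha s hs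
    simp only [hA, Set.mem_setOf_eq]
    simp only [Nat.sub_sub] at hres
    exact hres
  obtain ⟨N, hN⟩ := semigroup_cofinite {s : ℕ | 0 < g s}
    (fun d hd => by obtain ⟨n, hn1, hn2⟩ := hper d hd; exact ⟨n, hn1, hn2⟩) A h0A hclA
  refine ⟨fun j => φ j - N, ?_, ?_⟩
  · rw [tendsto_atTop]
    intro b
    filter_upwards [hφ.eventually_ge_atTop (b + N)] with j hj
    omega
  · intro i
    have := hN (N + i) (by omega)
    simp only [hA, Set.mem_setOf_eq] at this
    have he : ∀ j, φ j - (N + i) = φ j - N - i := fun j => by omega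
    simpa only [he] using this

lemma renSeq_tendsto (g : ℕ → ℝ) (hgnn : ∀ n, 0 ≤ g n) (hg0 : g 0 = 0)
    (hgsum : Summable g) (hproper : ∑' n, g n = 1)
    (hper : ∀ d : ℕ, 1 < d → ∃ n, 0 < g n ∧ ¬ d ∣ n)
    (hmean : Summable fun n : ℕ => (n : ℝ) * g n) :
    Tendsto (renSeq g) atTop (𝓝 (1 / ∑' n : ℕ, (n : ℝ) * g n)) := by
  have h0 : ∀ n, 0 ≤ renSeq g n := renSeq_nonneg g hgnn
  have h1 : ∀ n, renSeq g n ≤ 1 := renSeq_le_one g hgnn hg0 hgsum hproper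
  set m := ∑' n : ℕ, (n : ℝ) * g n with hm
  have hmpos : 0 < m := by
    obtain ⟨k, hk1, hk2⟩ := hper 2 (by norm_num)
    have hk0 : 1 ≤ k := by
      rcases Nat.eq_zero_or_pos k with rfl | h
      · exact absurd hg0 (by linarith [hk1])
      · omega
    have hle : (k:ℝ) * g k ≤ m := Summable.le_tsum hmean k
      (fun j _ => mul_nonneg (by positivity) (hgnn j))
    have : (0:ℝ) < (k:ℝ) * g k := by
      apply mul_pos _ hk1
      exact_mod_cast hk0
    linarith
  have hrsum : HasSum (tailR g) m := tailR_hasSum g hgnn hgsum hproper hmean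
  have hrnn : ∀ i, 0 ≤ tailR g i := tailR_nonneg g hgnn hgsum hproper
  set lam := limsup (renSeq g) atTop with hlam
  set mu := liminf (renSeq g) atTop with hmu
  have hmulam : mu ≤ lam :=
    liminf_le_limsup (bdd_le_of_le_one h1) (bdd_ge_of_nonneg h0)
  -- upper bound : m * lam ≤ 1
  obtain ⟨φ, hφmono, hφ⟩ := subseq_to_limsup (renSeq g) h0 h1
  obtain ⟨ω, hωtop, hω⟩ := renewal_limit_subseq g hgnn hg0 hgsum hproper hper
    lam φ hφmono.tendsto_atTop (Or.inl rfl) hφ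
  have hupper : m * lam ≤ 1 := by
    have hK : ∀ K : ℕ, (∑ i ∈ range (K+1), tailR g i) * lam ≤ 1 := by
      intro K
      have hev : ∀ᶠ j in atTop, ∑ i ∈ range (K+1), tailR g i * renSeq g (ω j - i) ≤ 1 := by
        filter_upwards [hωtop.eventually_ge_atTop (K+1)] with j hj
        have hid := tailR_identity g hg0 (ω j)
        have hωj : 1 ≤ ω j := by omega
        obtain ⟨n', hn'⟩ : ∃ n', ω j = n' + 1 := ⟨ω j - 1, by omega⟩
        rw [hn'] at hid hj ⊢
        rw [← Finset.sum_range_add_sum_Ico (fun i => tailR g i * renSeq g (n' + 1 - i))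
          (by omega : K + 1 ≤ n' + 1 + 1)] at hid
        have hpos : (0:ℝ) ≤ ∑ i ∈ Finset.Ico (K+1) (n'+1+1),
            tailR g i * renSeq g (n' + 1 - i) :=
          Finset.sum_nonneg fun i _ => mul_nonneg (hrnn i) (h0 _)
        linarith
      have htend : Tendsto (fun j => ∑ i ∈ range (K+1), tailR g i * renSeq g (ω j - i))
          atTop (𝓝 (∑ i ∈ range (K+1), tailR g i * lam)) :=
        tendsto_finset_sum _ (fun i _ => (hω i).const_mul (tailR g i))
      have := le_of_tendsto htend hev
      rw [← Finset.sum_mul] at this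
      exact this
    have htendK : Tendsto (fun K => (∑ i ∈ range (K+1), tailR g i) * lam) atTop
        (𝓝 (m * lam)) := (partial_sums_tendsto' (tailR g) hrsum).mul_const lam
    exact le_of_tendsto htendK (Eventually.of_forall hK)
  -- lower bound : 1 ≤ m * mu
  obtain ⟨φ', hφ'mono, hφ'⟩ := subseq_to_liminf (renSeq g) h0 h1
  obtain ⟨ω', hω'top, hω'⟩ := renewal_limit_subseq g hgnn hg0 hgsum hproper hper
    mu φ' hφ'mono.tendsto_atTop (Or.inr rfl) hφ'
  have hlower : 1 ≤ m * mu := by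
    have hK : ∀ K : ℕ, 1 ≤ (∑ i ∈ range (K+1), tailR g i) * mu
        + (m - ∑ i ∈ range (K+1), tailR g i) := by
      intro K
      have hev : ∀ᶠ j in atTop, 1 ≤ ∑ i ∈ range (K+1), tailR g i * renSeq g (ω' j - i)
          + (m - ∑ i ∈ range (K+1), tailR g i) := by
        filter_upwards [hω'top.eventually_ge_atTop (K+1)] with j hj
        have hid := tailR_identity g hg0 (ω' j)
        obtain ⟨n', hn'⟩ : ∃ n', ω' j = n' + 1 := ⟨ω' j - 1, by omega⟩
        rw [hn'] at hid hj ⊢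
        rw [← Finset.sum_range_add_sum_Ico (fun i => tailR g i * renSeq g (n' + 1 - i))
          (by omega : K + 1 ≤ n' + 1 + 1)] at hid
        have hb : ∑ i ∈ Finset.Ico (K+1) (n'+1+1), tailR g i * renSeq g (n' + 1 - i)
            ≤ m - ∑ i ∈ range (K+1), tailR g i := by
          have hb1 : ∑ i ∈ Finset.Ico (K+1) (n'+1+1), tailR g i * renSeq g (n' + 1 - i)
              ≤ ∑ i ∈ Finset.Ico (K+1) (n'+1+1), tailR g i := by
            apply Finset.sum_le_sum
            intro i hi
            have := h1 (n' + 1 - i)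
            nlinarith [hrnn i, h0 (n' + 1 - i)]
          have hb2 : ∑ i ∈ range (K+1), tailR g i + ∑ i ∈ Finset.Ico (K+1) (n'+1+1), tailR g i
              ≤ m := by
            rw [Finset.sum_range_add_sum_Ico (tailR g) (by omega : K + 1 ≤ n' + 1 + 1)]
            rw [← hrsum.tsum_eq]
            exact Summable.sum_le_tsum _ (fun i _ => hrnn i) hrsum.summable
          linarith
        linarith
      have htend : Tendsto (fun j => ∑ i ∈ range (K+1), tailR g i * renSeq g (ω' j - i)
          + (m - ∑ i ∈ range (K+1), tailR g i)) atTop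
          (𝓝 (∑ i ∈ range (K+1), tailR g i * mu + (m - ∑ i ∈ range (K+1), tailR g i))) :=
        (tendsto_finset_sum _ (fun i _ => (hω' i).const_mul (tailR g i))).add_const _
      have := ge_of_tendsto htend hev
      rw [← Finset.sum_mul] at this
      exact this
    have htendK : Tendsto (fun K => (∑ i ∈ range (K+1), tailR g i) * mu
        + (m - ∑ i ∈ range (K+1), tailR g i)) atTop (𝓝 (m * mu + (m - m))) :=
      ((partial_sums_tendsto' (tailR g) hrsum).mul_const mu).add
        ((partial_sums_tendsto' (tailR g) hrsum).const_sub m)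
    have := ge_of_tendsto htendK (Eventually.of_forall hK)
    linarith
  have hlameq : lam = 1 / m := by
    have h2 : m * mu ≤ m * lam := by nlinarith
    have h3 : m * lam = 1 := by linarith
    field_simp
    linarith [h3]
  have hmueq : mu = 1 / m := by
    have h2 : m * mu ≤ m * lam := by nlinarith
    have h3 : m * mu = 1 := by linarith
    field_simp
    linarith [h3]
  exact tendsto_of_liminf_eq_limsup hmueq hlameq
    (bdd_le_of_le_one h1) (bdd_ge_of_nonneg h0)

theorem discrete_renewal_theorem
    (g h x : ℕ → ℝ)
    (hgnn : ∀ n, 0 ≤ g n) (hhnn : ∀ n, 0 ≤ h n) (hxnn : ∀ n, 0 ≤ x n)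
    (hg0 : g 0 = 0)
    (hgsum : Summable g) (hproper : ∑' n, g n = 1)
    (hper : ∀ d : ℕ, 1 < d → ∃ n, 0 < g n ∧ ¬ d ∣ n)
    (hmean : Summable fun n : ℕ => (n : ℝ) * g n)
    (hhsum : Summable h)
    (hbdd : ∃ C : ℝ, ∀ n, x n ≤ C)
    (hren : ∀ n : ℕ, x n = h n + ∑ m ∈ range (n + 1), x (n - m) * g m) :
    Tendsto x atTop (nhds ((∑' m : ℕ, h m) / ∑' n : ℕ, (n : ℝ) * g n)) := by
  have h0 : ∀ n, 0 ≤ renSeq g n := renSeq_nonneg g hgnn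
  have h1 : ∀ n, renSeq g n ≤ 1 := renSeq_le_one g hgnn hg0 hgsum hproper
  set m := ∑' n : ℕ, (n : ℝ) * g n with hm
  set f : ℕ → ℕ → ℝ := fun n k => if k ≤ n then h k * renSeq g (n-k) else 0 with hf
  have hx : ∀ n, x n = ∑' k, f n k := by
    intro n
    rw [x_eq_conv g h x hg0 hren n]
    rw [tsum_eq_sum (s := range (n+1)) (by
      intro k hk
      have : ¬ k ≤ n := fun hle => hk (mem_range.mpr (by omega))
      simp only [hf]
      rw [if_neg this])]
    apply Finset.sum_congr rfl
    intro k hk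
    have := mem_range.mp hk
    simp only [hf]
    rw [if_pos (by omega)]
  have hpt : ∀ k : ℕ, Tendsto (fun n => f n k) atTop (𝓝 (h k * (1/m))) := by
    intro k
    have hsub : Tendsto (fun n : ℕ => n - k) atTop atTop := by
      rw [tendsto_atTop]
      intro b
      filter_upwards [eventually_ge_atTop (b + k)] with n hn
      omega
    have hcomp : Tendsto (fun n : ℕ => renSeq g (n - k)) atTop (𝓝 (1/m)) :=
      (renSeq_tendsto g hgnn hg0 hgsum hproper hper hmean).comp hsub
    have : Tendsto (fun n : ℕ => h k * renSeq g (n - k)) atTop (𝓝 (h k * (1/m))) :=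
      hcomp.const_mul (h k)
    apply this.congr'
    filter_upwards [eventually_ge_atTop k] with n hn
    simp only [hf]
    rw [if_pos hn]
  have hbound : ∀ᶠ n in atTop, ∀ k, ‖f n k‖ ≤ h k := by
    apply Eventually.of_forall
    intro n k
    simp only [hf]
    by_cases hkn : k ≤ n
    · rw [if_pos hkn, Real.norm_eq_abs, abs_of_nonneg (mul_nonneg (hhnn k) (h0 _))]
      nlinarith [hhnn k, h0 (n-k), h1 (n-k)]
    · rw [if_neg hkn]
      simpa using hhnn k
  have hmain : Tendsto (fun n => ∑' k, f n k) atTop (𝓝 (∑' k, h k * (1/m))) :=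
    tendsto_tsum_of_dominated_convergence hhsum hpt hbound
  have he2 : ∑' k, h k * (1/m) = (∑' k, h k) / m := by
    rw [Summable.tsum_mul_right _ hhsum, mul_one_div]
  rw [he2] at hmain
  have hxeq : x = fun n => ∑' k, f n k := funext hx
  rw [hxeq]
  exact hmain
end
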